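/- Semantic correctness of the k-decider: fix Boolean functions B_0,...,B_{N−1} and an assignment α under which exactly k of them are true (i.e., Thr^{B⃗}_k holds and Thr^{B⃗}_{k+1} fails). Then the k-decider DecExt^0_{0,0} (built from copies of the B_j with a counter and a flag) evaluates under α to A if B_i is false under α, and to C if B_i is true under α. -/

import Mathlib

/-- The decider nodes `DecExt^j_{c,b}` built from the Boolean values `B_0, …, B_{N-1}`,
with distinguished index `i`, target count `k`, and output values `A` (flag 0) and `C`
(flag 1):
`DecExt^j_{c,b} = DecExt^{j+1}_{c,b} ∨ (B_j ∧ DecExt^{j+1}_{c+1,b})` for `j < N`, `j ≠ i`;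
`DecExt^i_{c,0} = DecExt^{i+1}_{c,0} ∨ (B_i ∧ DecExt^{i+1}_{c+1,1})`;
`DecExt^N_{k,0} = A`, `DecExt^N_{k,1} = C`, `DecExt^N_{c,b} = 0` for `c ≠ k`. -/
def decExt (N i : ℕ) (k : ℤ) (A C : Bool) (B : ℕ → Bool) (j : ℕ) (c : ℤ) (b : Bool) : Bool :=
  if _h : j < N then
    if j = i ∧ b = false then
      decExt N i k A C B (j + 1) c false || (B i && decExt N i k A C B (j + 1) (c + 1) true)
    else
      decExt N i k A C B (j + 1) c b || (B j && decExt N i k A C B (j + 1) (c + 1) b)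
  else if c = k then (if b then C else A) else false
termination_by N - j
decreasing_by all_goals omega

/-- The number of true values among `B_j, …, B_{N-1}`. -/
def cnt (N : ℕ) (B : ℕ → Bool) (j : ℕ) : ℕ :=
  ((Finset.Ico j N).filter fun m => B m = true).card

/-- Semantic correctness of the k-decider: under an assignment making exactly `k` of
`B_0, …, B_{N-1}` true, the decider `DecExt^0_{0,0}` evaluates to `A` if `B_i` is false
and to `C` if `B_i` is true. -/
lemma cnt_of_ge (N : ℕ) (B : ℕ → Bool) (j : ℕ) (h : N ≤ j) : cnt N B j = 0 := by
  simp [cnt, Finset.Ico_eq_empty (not_lt.2 h)]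

lemma cnt_succ (N : ℕ) (B : ℕ → Bool) (j : ℕ) (h : j < N) :
    cnt N B j = (if B j then 1 else 0) + cnt N B (j + 1) := by
  unfold cnt
  rw [← Finset.insert_Ico_add_one_left_eq_Ico h, Finset.filter_insert]
  by_cases hb : B j <;> simp [hb, Finset.card_insert_of_notMem, Finset.mem_filter] <;> omega

lemma lem_true (N i : ℕ) (k : ℤ) (A C : Bool) (B : ℕ → Bool) (j : ℕ) (c : ℤ) :
    decExt N i k A C B j c true = (C && decide (c ≤ k ∧ k ≤ c + cnt N B j)) := by
  rw [decExt]
  by_cases h : j < N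
  · rw [dif_pos h, if_neg (by simp)]
    rw [lem_true N i k A C B (j+1) c, lem_true N i k A C B (j+1) (c+1),
      cnt_succ N B j h]
    cases hb : B j <;> cases C <;> simp [hb] <;> (first
      | rfl
      | (rw [Bool.eq_iff_iff]; simp only [Bool.or_eq_true, Bool.and_eq_true, decide_eq_true_eq]; push_cast; omega))
  · rw [dif_neg h, cnt_of_ge N B j (not_lt.1 h)]
    by_cases hc : c = k <;> cases C <;> simp [hc] <;> omega
termination_by N - j
decreasing_by all_goals omega

lemma lem_false_gt (N i : ℕ) (k : ℤ) (A C : Bool) (B : ℕ → Bool) (j : ℕ) (hj : i < j) (c : ℤ) :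
    decExt N i k A C B j c false = (A && decide (c ≤ k ∧ k ≤ c + cnt N B j)) := by
  rw [decExt]
  by_cases h : j < N
  · rw [dif_pos h, if_neg (by omega)]
    rw [lem_false_gt N i k A C B (j+1) (by omega) c,
      lem_false_gt N i k A C B (j+1) (by omega) (c+1), cnt_succ N B j h]
    cases hb : B j <;> cases A <;> simp [hb] <;> (first
      | rfl
      | (rw [Bool.eq_iff_iff]; simp only [Bool.or_eq_true, Bool.and_eq_true, decide_eq_true_eq]; push_cast; omega))
  · rw [dif_neg h, cnt_of_ge N B j (not_lt.1 h)]
    by_cases hc : c = k <;> cases A <;> simp [hc] <;> omega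
termination_by N - j
decreasing_by all_goals omega

lemma cnt_erase (N i : ℕ) (B : ℕ → Bool) (j : ℕ) (hij : i < j) :
    cnt N (fun m => if m = i then false else B m) j = cnt N B j := by
  unfold cnt
  congr 1
  apply Finset.filter_congr
  intro m hm
  simp only [Finset.mem_Ico] at hm
  simp [show m ≠ i by omega]

lemma lem_false_le (N i : ℕ) (hi : i < N) (k : ℤ) (A C : Bool) (B : ℕ → Bool) (j : ℕ)
    (hj : j ≤ i) (c : ℤ) :
    decExt N i k A C B j c false =
      ((A && decide (c ≤ k ∧ k ≤ c + cnt N (fun m => if m = i then false else B m) j)) ||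
       (B i && C && decide (c + 1 ≤ k ∧ k ≤ c + 1 + cnt N (fun m => if m = i then false else B m) j))) := by
  rcases eq_or_lt_of_le hj with rfl | hlt
  · rw [decExt, dif_pos hi, if_pos ⟨rfl, rfl⟩]
    rw [lem_false_gt N j k A C B (j+1) (by omega) c, lem_true N j k A C B (j+1) (c+1),
      cnt_succ N (fun m => if m = j then false else B m) j hi]
    rw [cnt_erase N j B (j+1) (by omega)]
    simp only [if_pos rfl]
    cases B j <;> cases A <;> cases C <;> simp <;> (first
      | rfl
      | (rw [Bool.eq_iff_iff]; simp only [Bool.or_eq_true, Bool.and_eq_true, decide_eq_true_eq]; push_cast; omega))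
  · rw [decExt, dif_pos (by omega), if_neg (by omega)]
    rw [lem_false_le N i hi k A C B (j+1) (by omega) c,
      lem_false_le N i hi k A C B (j+1) (by omega) (c+1),
      cnt_succ N (fun m => if m = i then false else B m) j (by omega)]
    simp only [if_neg (show j ≠ i by omega)]
    cases hb : B j <;> cases B i <;> cases A <;> cases C <;> simp [hb] <;> (first
      | rfl
      | (rw [Bool.eq_iff_iff]; simp only [Bool.or_eq_true, Bool.and_eq_true, decide_eq_true_eq]; push_cast; omega))
termination_by i - j
decreasing_by all_goals omega

lemma cnt_split (N i : ℕ) (hi : i < N) (B : ℕ → Bool) :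
    (cnt N B 0 : ℤ) = (if B i then 1 else 0) + cnt N (fun m => if m = i then false else B m) 0 := by
  have h2 : cnt N B 0 = (if B i then 1 else 0) + cnt N (fun m => if m = i then false else B m) 0 := by
    by_cases hb : B i
    · have he : (Finset.Ico 0 N).filter (fun m => B m = true)
          = insert i ((Finset.Ico 0 N).filter (fun m => (if m = i then false else B m) = true)) := by
        ext m
        by_cases hm : m = i
        · subst hm; simp [hb, hi]
        · simp [hm]
      rw [cnt, cnt, he, Finset.card_insert_of_notMem (by simp)]
      simp [hb]
      omega
    · have he : (fun m => if m = i then false else B m) = B := by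
        funext m; by_cases hm : m = i <;> simp [hm, hb]
      rw [he]; simp [hb]
  exact_mod_cast congrArg (Nat.cast : ℕ → ℤ) h2

theorem decider_correct (N i : ℕ) (hi : i < N) (k : ℤ) (A C : Bool) (B : ℕ → Bool)
    (hk : (cnt N B 0 : ℤ) = k) :
    decExt N i k A C B 0 0 false = if B i then C else A := by
  rw [lem_false_le N i hi k A C B 0 (by omega) 0]
  rw [cnt_split N i hi B] at hk
  cases hb : B i <;> cases A <;> cases C <;> simp [hb] at hk ⊢ <;> omega
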